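/- For any real-linear map A : C₀ → C₀^⊥, the symplectic orthogonal of the graph C_A is exactly (C_A)^ω = { (x_ξ, ξ + i·Bᵀξ) : ξ ∈ ℝ^{n−k} } ⊆ ℂ^k × ℂ^{n−k}; that is, an element (ξ_H, ξ_I + iζ) with ξ_I, ζ ∈ ℝ^{n−k} lies in (C_A)^ω if and only if ξ_H = x_{ξ_I} and ζ = Bᵀ ξ_I. -/

import Mathlib

noncomputable section

/-- The standard symplectic form `ω(u,v) = Re⟨iu,v⟩` on `ℂ^ι`, with the Hermitian
inner product `⟨u,v⟩ = ∑ u_j * conj v_j`. -/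
def omegaV {ι : Type*} [Fintype ι] (u v : ι → ℂ) : ℝ :=
  ∑ j, (Complex.I * u j * (starRingEnd ℂ) (v j)).re

/-- The symplectic form on `ℂⁿ = ℂ^k × ℂ^m`. -/
def omegaF {k m : ℕ} (p q : (Fin k → ℂ) × (Fin m → ℂ)) : ℝ :=
  omegaV p.1 q.1 + omegaV p.2 q.2

/-- The graph `C_A = {x + A(x) : x ∈ C₀}` of the linear map `A : C₀ → C₀^⊥`,
`A(v_H, v_I) = i·a(v_H) + i·B v_I`, over the model coisotropic subspace
`C₀ = ℂ^k × ℝ^m`. -/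
def graphCA {k m : ℕ} (a : (Fin k → ℂ) →ₗ[ℝ] (Fin m → ℝ))
    (B : Matrix (Fin m) (Fin m) ℝ) : Set ((Fin k → ℂ) × (Fin m → ℂ)) :=
  {p | ∃ (v : Fin k → ℂ) (ξ : Fin m → ℝ),
    p = (v, fun j => (ξ j : ℂ) + Complex.I * ((a v j : ℝ) + (B.mulVec ξ j : ℝ)))}

/-- The symplectic orthogonal of a set `S ⊆ ℂ^k × ℂ^m`. -/
def sOrthF {k m : ℕ} (S : Set ((Fin k → ℂ) × (Fin m → ℂ))) :
    Set ((Fin k → ℂ) × (Fin m → ℂ)) :=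
  {q | ∀ p ∈ S, omegaF p q = 0}

lemma omegaV_eq {ι : Type*} [Fintype ι] (u w : ι → ℂ) :
    omegaV u w = ∑ j, ((u j).re * (w j).im - (u j).im * (w j).re) := by
  unfold omegaV
  refine Finset.sum_congr rfl fun j _ => ?_
  simp [Complex.mul_re, Complex.mul_im]
  ring

lemma omegaV_eq_zero {ι : Type*} [Fintype ι] (w : ι → ℂ)
    (h : ∀ v, omegaV v w = 0) : w = 0 := by
  have h1 := h (fun j => Complex.I * w j)
  rw [omegaV_eq] at h1
  have h2 : ∑ j, ((w j).re ^ 2 + (w j).im ^ 2) = 0 := by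
    rw [← neg_eq_zero, ← Finset.sum_neg_distrib, ← h1]
    refine Finset.sum_congr rfl fun j _ => ?_
    simp [Complex.mul_re, Complex.mul_im]
    ring
  have h3 := (Finset.sum_eq_zero_iff_of_nonneg
    (fun j _ => by positivity)).mp h2
  funext j
  have := h3 j (Finset.mem_univ j)
  have hre : (w j).re = 0 := by nlinarith [sq_nonneg (w j).re, sq_nonneg (w j).im]
  have him : (w j).im = 0 := by nlinarith [sq_nonneg (w j).re, sq_nonneg (w j).im]
  exact Complex.ext hre him

lemma omegaF_graph {k m : ℕ} (a : (Fin k → ℂ) →ₗ[ℝ] (Fin m → ℝ))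
    (B : Matrix (Fin m) (Fin m) ℝ) (v : Fin k → ℂ) (ξ : Fin m → ℝ)
    (q : (Fin k → ℂ) × (Fin m → ℂ)) :
    omegaF (v, fun j => (ξ j : ℂ) + Complex.I * ((a v j : ℝ) + (B.mulVec ξ j : ℝ))) q
      = omegaV v q.1 + ∑ j, (ξ j * (q.2 j).im - (a v j + B.mulVec ξ j) * (q.2 j).re) := by
  unfold omegaF
  congr 1
  rw [omegaV_eq]
  refine Finset.sum_congr rfl fun j _ => ?_
  simp
  try ring

lemma swap_sum {m : ℕ} (B : Matrix (Fin m) (Fin m) ℝ) (ξ ξ0 : Fin m → ℝ) :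
    ∑ j, ξ j * B.transpose.mulVec ξ0 j = ∑ j, B.mulVec ξ j * ξ0 j := by
  calc ∑ j, ξ j * B.transpose.mulVec ξ0 j
      = ∑ j, ∑ l, ξ j * (B l j * ξ0 l) := by
        simp [Matrix.mulVec, dotProduct, Matrix.transpose_apply, Finset.mul_sum]
    _ = ∑ l, ∑ j, ξ j * (B l j * ξ0 l) := Finset.sum_comm
    _ = ∑ j, B.mulVec ξ j * ξ0 j := by
        simp only [Matrix.mulVec, dotProduct, Finset.sum_mul]
        exact Finset.sum_congr rfl fun l _ => Finset.sum_congr rfl fun j _ => by ring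

/-- The symplectic orthogonal of the graph `C_A` is exactly
`(C_A)^ω = {(x_ξ, ξ + i·Bᵀξ) : ξ ∈ ℝ^m}`, where `x_ξ ∈ ℂ^k` is the unique vector
with `ω(v, x_ξ) = a(v)·ξ` for all `v ∈ ℂ^k`. -/
theorem symplOrth_of_graph (k m : ℕ)
    (a : (Fin k → ℂ) →ₗ[ℝ] (Fin m → ℝ)) (B : Matrix (Fin m) (Fin m) ℝ)
    (x : (Fin m → ℝ) → (Fin k → ℂ))
    (hx : ∀ (ξ : Fin m → ℝ) (v : Fin k → ℂ), omegaV v (x ξ) = ∑ j, a v j * ξ j) :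
    sOrthF (graphCA a B) =
      {p | ∃ ξ : Fin m → ℝ,
        p = (x ξ, fun j => (ξ j : ℂ) + Complex.I * (B.transpose.mulVec ξ j : ℝ))} := by
  ext q
  simp only [sOrthF, graphCA, Set.mem_setOf_eq]
  constructor
  · intro hq
    set s : Fin m → ℝ := fun j => (q.2 j).re with hs
    set t : Fin m → ℝ := fun j => (q.2 j).im with ht
    have key : ∀ (v : Fin k → ℂ) (ξ : Fin m → ℝ),
        omegaV v q.1 + ∑ j, (ξ j * t j - (a v j + B.mulVec ξ j) * s j) = 0 := by
      intro v ξ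
      rw [← omegaF_graph a B v ξ q]
      exact hq _ ⟨v, ξ, rfl⟩
    have h1 : ∀ v, omegaV v q.1 = ∑ j, a v j * s j := by
      intro v
      have hk := key v 0
      have h0 : ∑ j, ((0 : Fin m → ℝ) j * t j - (a v j + B.mulVec 0 j) * s j)
          = -∑ j, a v j * s j := by
        rw [← Finset.sum_neg_distrib]
        refine Finset.sum_congr rfl fun j _ => ?_
        simp [Matrix.mulVec_zero]
      rw [h0] at hk
      linarith
    have hq1 : q.1 = x s := by
      have hdiff : ∀ v, omegaV v (fun j => q.1 j - x s j) = 0 := by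
        intro v
        rw [omegaV_eq]
        have e : ∑ j, ((v j).re * ((fun j => q.1 j - x s j) j).im
              - (v j).im * ((fun j => q.1 j - x s j) j).re)
            = (∑ j, ((v j).re * (q.1 j).im - (v j).im * (q.1 j).re))
              - ∑ j, ((v j).re * (x s j).im - (v j).im * (x s j).re) := by
          rw [← Finset.sum_sub_distrib]
          refine Finset.sum_congr rfl fun j _ => ?_
          simp [Complex.sub_re, Complex.sub_im]
          ring
        rw [e, ← omegaV_eq, ← omegaV_eq, h1 v, hx s v, sub_self]
      have := omegaV_eq_zero _ hdiff
      funext j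
      have hj := congrFun this j
      simp only [Pi.zero_apply] at hj
      linear_combination hj
    have h2 : ∀ i, t i = B.transpose.mulVec s i := by
      intro i
      have hk := key 0 ((Pi.single i 1 : Fin m → ℝ))
      have hz : omegaV (0 : Fin k → ℂ) q.1 = 0 := by
        rw [omegaV_eq]; simp
      have ha0 : a (0 : Fin k → ℂ) = 0 := map_zero a
      have h0 : ∑ j, ((Pi.single i 1 : Fin m → ℝ) j * t j
          - (a (0 : Fin k → ℂ) j + B.mulVec ((Pi.single i 1 : Fin m → ℝ)) j) * s j)
          = t i - B.transpose.mulVec s i := by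
        rw [Finset.sum_sub_distrib]
        congr 1
        · rw [Finset.sum_eq_single i]
          · simp
          · intro b _ hb; simp [Pi.single_apply, hb]
          · intro hb; exact absurd (Finset.mem_univ i) hb
        · simp only [ha0, Pi.zero_apply, zero_add]
          simp only [Matrix.mulVec, dotProduct, Matrix.transpose_apply]
          have e : ∀ j, (∑ l, B j l * (Pi.single i 1 : Fin m → ℝ) l) = B j i := by
            intro j
            rw [Finset.sum_eq_single i]
            · simp
            · intro b _ hb; simp [Pi.single_apply, hb]
            · intro hb; exact absurd (Finset.mem_univ i) hb
          exact Finset.sum_congr rfl fun j _ => by rw [e j]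
      rw [hz, zero_add, h0] at hk
      linarith
    refine ⟨s, ?_⟩
    have hq2 : q.2 = fun j => (s j : ℂ) + Complex.I * (B.transpose.mulVec s j : ℝ) := by
      funext j
      refine Complex.ext ?_ ?_
      · simp; rfl
      · simp [← h2 j]; rfl
    exact Prod.ext hq1 hq2
  · rintro ⟨ξ0, rfl⟩ p ⟨v, ξ, rfl⟩
    rw [omegaF_graph]
    have hre : ∀ j, (((fun j => (ξ0 j : ℂ)
        + Complex.I * (B.transpose.mulVec ξ0 j : ℝ)) : Fin m → ℂ) j).re = ξ0 j := by
      intro j; simp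
    have him : ∀ j, (((fun j => (ξ0 j : ℂ)
        + Complex.I * (B.transpose.mulVec ξ0 j : ℝ)) : Fin m → ℂ) j).im
        = B.transpose.mulVec ξ0 j := by
      intro j; simp
    simp only [hre, him, hx ξ0 v]
    have : ∑ j, (ξ j * B.transpose.mulVec ξ0 j - (a v j + B.mulVec ξ j) * ξ0 j)
        = ∑ j, ξ j * B.transpose.mulVec ξ0 j - ∑ j, a v j * ξ0 j
          - ∑ j, B.mulVec ξ j * ξ0 j := by
      rw [← Finset.sum_sub_distrib, ← Finset.sum_sub_distrib]
      refine Finset.sum_congr rfl fun j _ => by ring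
    rw [this, swap_sum]
    ring

end
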